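/- Let S be a finite nonempty index set and let p, q : S → ℝ satisfy 0 ≤ p(s) ≤ 1 and 0 ≤ q(s) ≤ 1 for all s ∈ S. Define for ε > 0 the perturbed depths f_ε(p) = Σ_{s∈S} -log((3/2)·((1 + ε) - p(s))) and f_ε(q) = Σ_{s∈S} -log((3/2)·((1 + ε) - q(s))). If the number of indices s with p(s) = 1 is strictly greater than the number of indices s with q(s) = 1, then there exists c > 0 such that f_ε(p) > f_ε(q) for all ε with 0 < ε < c. -/

import Mathlib

set_option maxHeartbeats 1000000 in
/-- If the number of indices with `p(s) = 1` strictly exceeds the number of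
indices with `q(s) = 1`, then for all sufficiently small `ε > 0` the perturbed
depth of `p` exceeds that of `q`:
`Σ_s -log((3/2)·((1+ε) - p(s))) > Σ_s -log((3/2)·((1+ε) - q(s)))`. -/
theorem perturbed_depth_compare {S : Type*} [Fintype S] [Nonempty S]
    (p q : S → ℝ) (hp : ∀ s, 0 ≤ p s ∧ p s ≤ 1) (hq : ∀ s, 0 ≤ q s ∧ q s ≤ 1)
    (hcard : (Finset.univ.filter fun s => p s = 1).card >
      (Finset.univ.filter fun s => q s = 1).card) :
    ∃ c > (0 : ℝ), ∀ ε : ℝ, 0 < ε → ε < c →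
      (∑ s, -Real.log ((3 / 2) * ((1 + ε) - p s))) >
        ∑ s, -Real.log ((3 / 2) * ((1 + ε) - q s)) := by
  classical
  set A := Finset.univ.filter (fun s => p s = 1) with hA
  set A' := Finset.univ.filter (fun s => ¬ p s = 1) with hA'
  set B := Finset.univ.filter (fun s => q s = 1) with hB
  set B' := Finset.univ.filter (fun s => ¬ q s = 1) with hB'
  set n := Fintype.card S with hn
  set M : ℝ := ∑ s ∈ B', -Real.log (3/2 * (1 - q s)) with hM
  set T : ℝ := max (M + n * Real.log 3) 0 with hT
  refine ⟨min 1 ((2/3) * Real.exp (-T - 1)), lt_min one_pos (by positivity), ?_⟩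
  intro ε hε hεc
  have hε1 : ε < 1 := lt_of_lt_of_le hεc (min_le_left _ _)
  have hL : Real.log (3/2 * ε) < -T - 1 := by
    have h1 : (3:ℝ)/2 * ε < Real.exp (-T - 1) := by
      have := lt_of_lt_of_le hεc (min_le_right _ _)
      nlinarith
    calc Real.log (3/2*ε) < Real.log (Real.exp (-T-1)) :=
          Real.log_lt_log (by positivity) h1
      _ = -T - 1 := Real.log_exp _
  set L := -Real.log (3/2 * ε) with hLdef
  have hLT : T < L := by simp only [hLdef]; linarith
  have hL0 : 0 < L := lt_of_le_of_lt (le_max_right _ _) hLT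
  -- split the p-sum
  have hpsplit : (∑ s, -Real.log ((3 / 2) * ((1 + ε) - p s)))
      = ∑ s ∈ A, -Real.log ((3 / 2) * ((1 + ε) - p s))
        + ∑ s ∈ A', -Real.log ((3 / 2) * ((1 + ε) - p s)) :=
    (Finset.sum_filter_add_sum_filter_not Finset.univ _ _).symm
  have hqsplit : (∑ s, -Real.log ((3 / 2) * ((1 + ε) - q s)))
      = ∑ s ∈ B, -Real.log ((3 / 2) * ((1 + ε) - q s))
        + ∑ s ∈ B', -Real.log ((3 / 2) * ((1 + ε) - q s)) :=
    (Finset.sum_filter_add_sum_filter_not Finset.univ _ _).symm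
  have hpA : ∑ s ∈ A, -Real.log ((3 / 2) * ((1 + ε) - p s)) = A.card * L := by
    rw [Finset.sum_congr rfl (fun s hs => ?_), Finset.sum_const, nsmul_eq_mul]
    have : p s = 1 := (Finset.mem_filter.mp hs).2
    rw [this]; ring_nf; rw [hLdef, mul_comm]
  have hqB : ∑ s ∈ B, -Real.log ((3 / 2) * ((1 + ε) - q s)) = B.card * L := by
    rw [Finset.sum_congr rfl (fun s hs => ?_), Finset.sum_const, nsmul_eq_mul]
    have : q s = 1 := (Finset.mem_filter.mp hs).2
    rw [this]; ring_nf; rw [hLdef, mul_comm]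
  have hpA' : ∑ s ∈ A', -Real.log ((3 / 2) * ((1 + ε) - p s))
      ≥ -(n * Real.log 3) := by
    have h1 : ∀ s ∈ A', -Real.log ((3 / 2) * ((1 + ε) - p s)) ≥ -Real.log 3 := by
      intro s _
      have h2 := (hp s).2
      have hpos : (0:ℝ) < (3/2) * ((1 + ε) - p s) := by nlinarith
      have hle : (3/2 : ℝ) * ((1 + ε) - p s) ≤ 3 := by nlinarith [hε1, (hp s).1]
      have := Real.log_le_log (by positivity) hle
      linarith
    have h3 : ∑ s ∈ A', -Real.log ((3 / 2) * ((1 + ε) - p s))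
        ≥ ∑ _s ∈ A', (-Real.log 3) := Finset.sum_le_sum h1
    rw [Finset.sum_const, nsmul_eq_mul] at h3
    have hcardle : (A'.card : ℝ) ≤ n := by
      exact_mod_cast Finset.card_le_card (Finset.subset_univ A')
    have hlog3 : 0 ≤ Real.log 3 := Real.log_nonneg (by norm_num)
    nlinarith
  have hqB' : ∑ s ∈ B', -Real.log ((3 / 2) * ((1 + ε) - q s)) ≤ M := by
    apply Finset.sum_le_sum
    intro s hs
    have hne : q s ≠ 1 := (Finset.mem_filter.mp hs).2
    have hlt : q s < 1 := lt_of_le_of_ne (hq s).2 hne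
    have hpos : (0:ℝ) < (3/2) * (1 - q s) := by nlinarith
    have hle : (3/2:ℝ) * (1 - q s) ≤ (3/2) * ((1 + ε) - q s) := by nlinarith
    have := Real.log_le_log hpos hle
    linarith
  have hab : (B.card : ℝ) + 1 ≤ (A.card : ℝ) := by exact_mod_cast hcard
  have hTM : M + n * Real.log 3 ≤ T := le_max_left _ _
  rw [hpsplit, hqsplit, hpA, hqB]
  have hmul : (B.card : ℝ) * L + L ≤ (A.card : ℝ) * L := by nlinarith [hab, hL0]
  clear_value A A' B B' n M T L
  linarith [hpA', hqB', hLT, hTM, hmul]
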